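/- (Existence of bounded PE signals with prescribed constants, Lemma A(d), second part) Let X be a finite-dimensional real inner product space and let T, κ, M be positive constants with M ≥ √(2·κ·(dim X)/T). Then there exists a continuously differentiable signal g : [0,∞) → X with ‖g(t)‖ ≤ M for all t ≥ 0 that is PE with respect to the identity operator Id_X with constants (T,κ). (One such signal is g(τ) = √(2κ/T) · Σ_{ℓ=1}^{dim X} sin(2ℓπτ/T) e_ℓ for an orthonormal basis (e_ℓ) of X.) -/

import Mathlib

open Set

lemma cos_int_integral (T : ℝ) (hT : 0 < T) (k : ℤ) (hk : k ≠ 0) (t : ℝ) :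
    ∫ τ in t..t + T, Real.cos (2 * Real.pi * k / T * τ) = 0 := by
  have hc : (2 * Real.pi * k / T) ≠ 0 := by
    apply div_ne_zero _ hT.ne'
    have h1 := Real.pi_pos
    have h2 : (k : ℝ) ≠ 0 := Int.cast_ne_zero.mpr hk
    positivity
  rw [intervalIntegral.integral_comp_mul_left (fun x => Real.cos x) hc]
  rw [integral_cos]
  have : 2 * Real.pi * k / T * (t + T) = 2 * Real.pi * k / T * t + k * (2 * Real.pi) := by
    field_simp
  rw [this, Real.sin_add_int_mul_two_pi]
  simp

lemma sin_sin_integral (T : ℝ) (hT : 0 < T) (p q : ℕ) (t : ℝ) :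
    ∫ τ in t..t + T,
      Real.sin (2 * Real.pi * (p + 1) / T * τ) * Real.sin (2 * Real.pi * (q + 1) / T * τ)
      = if p = q then T / 2 else 0 := by
  have key : ∀ τ : ℝ,
      Real.sin (2 * Real.pi * (p + 1) / T * τ) * Real.sin (2 * Real.pi * (q + 1) / T * τ)
      = (Real.cos (2 * Real.pi * ((p : ℝ) - (q : ℝ)) / T * τ)
          - Real.cos (2 * Real.pi * ((p : ℝ) + (q : ℝ) + 2) / T * τ)) / 2 := by
    intro τ
    have h1 : 2 * Real.pi * ((p : ℝ) - (q : ℝ)) / T * τ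
        = 2 * Real.pi * (p + 1) / T * τ - 2 * Real.pi * (q + 1) / T * τ := by
      field_simp; ring
    have h2 : 2 * Real.pi * ((p : ℝ) + (q : ℝ) + 2) / T * τ
        = 2 * Real.pi * (p + 1) / T * τ + 2 * Real.pi * (q + 1) / T * τ := by
      field_simp; ring
    rw [h1, h2, Real.cos_sub, Real.cos_add]; ring
  rw [intervalIntegral.integral_congr (fun τ _ => key τ)]
  have hint : ∀ (a : ℝ), IntervalIntegrable (fun τ => Real.cos (a * τ)) MeasureTheory.volume t (t + T) :=
    fun a => (Real.continuous_cos.comp (continuous_const.mul continuous_id)).intervalIntegrable _ _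
  simp only [sub_div]
  rw [intervalIntegral.integral_sub ((hint _).div_const _) ((hint _).div_const _),
    intervalIntegral.integral_div, intervalIntegral.integral_div]
  have hs := cos_int_integral T hT ((p : ℤ) + (q : ℤ) + 2) (by omega) t
  push_cast at hs
  rw [hs]
  by_cases h : p = q
  · subst h
    rw [if_pos rfl]
    simp only [sub_self]
    rw [show (2 : ℝ) * Real.pi * 0 / T = 0 by ring]
    simp
  · have hd := cos_int_integral T hT ((p : ℤ) - (q : ℤ)) (by omega) t
    push_cast at hd
    rw [hd, if_neg h]
    norm_num


/-- **Existence of bounded PE signals with prescribed constants** (Lemma A(d), second part).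
Let `X` be a finite-dimensional real inner product space and `T, κ, M > 0` with
`M ≥ √(2·κ·(dim X)/T)`. Then there exists a continuously differentiable signal
`g : [0,∞) → X` bounded by `M` that is PE with respect to the identity `Id_X` with
constants `(T, κ)`. -/
theorem exists_bounded_pe_signal
    {X : Type*} [NormedAddCommGroup X] [InnerProductSpace ℝ X] [FiniteDimensional ℝ X]
    (T κ M : ℝ) (hT : 0 < T) (hκ : 0 < κ) (hM : 0 < M)
    (hMbig : Real.sqrt (2 * κ * (Module.finrank ℝ X) / T) ≤ M) :
    ∃ g : ℝ → X, ContDiff ℝ 1 g ∧ (∀ t : ℝ, 0 ≤ t → ‖g t‖ ≤ M) ∧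
      ∀ x : X, ∀ t : ℝ, 0 ≤ t →
        κ * ‖x‖ ^ 2 ≤ ∫ τ in t..(t + T), (inner ℝ (g τ) x : ℝ) ^ 2 := by
  classical
  set n := Module.finrank ℝ X with hn
  set b := stdOrthonormalBasis ℝ X with hb
  set c := Real.sqrt (2 * κ / T) with hc
  have hc0 : 0 ≤ c := Real.sqrt_nonneg _
  have hc2 : c ^ 2 = 2 * κ / T := Real.sq_sqrt (by positivity)
  set a : Fin n → ℝ := fun ℓ => 2 * Real.pi * ((ℓ : ℕ) + 1) / T with ha
  refine ⟨fun τ => ∑ ℓ : Fin n, (c * Real.sin (a ℓ * τ)) • b ℓ, ?_, ?_, ?_⟩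
  · apply ContDiff.sum
    intro ℓ _
    exact ((contDiff_const.mul
      (Real.contDiff_sin.comp (contDiff_const.mul contDiff_id))).smul contDiff_const)
  · intro t _
    have hinner : (inner ℝ (∑ ℓ : Fin n, (c * Real.sin (a ℓ * t)) • b ℓ)
        (∑ ℓ : Fin n, (c * Real.sin (a ℓ * t)) • b ℓ) : ℝ)
        = ∑ ℓ : Fin n, (c * Real.sin (a ℓ * t)) * (c * Real.sin (a ℓ * t)) := by
      simpa using b.orthonormal.inner_sum (fun ℓ => c * Real.sin (a ℓ * t))
        (fun ℓ => c * Real.sin (a ℓ * t)) Finset.univ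
    have hnorm : ‖∑ ℓ : Fin n, (c * Real.sin (a ℓ * t)) • b ℓ‖ ^ 2
        = ∑ ℓ : Fin n, (c * Real.sin (a ℓ * t)) ^ 2 := by
      rw [← real_inner_self_eq_norm_sq, hinner]
      exact Finset.sum_congr rfl fun ℓ _ => (sq _).symm
    have hle : ‖∑ ℓ : Fin n, (c * Real.sin (a ℓ * t)) • b ℓ‖ ^ 2 ≤ 2 * κ * n / T := by
      rw [hnorm]
      calc ∑ ℓ : Fin n, (c * Real.sin (a ℓ * t)) ^ 2
          ≤ ∑ _ℓ : Fin n, c ^ 2 := by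
            apply Finset.sum_le_sum
            intro ℓ _
            rw [mul_pow]
            nlinarith [Real.sin_sq_le_one (a ℓ * t), sq_nonneg c]
        _ = n * c ^ 2 := by simp [mul_comm]
        _ = 2 * κ * n / T := by rw [hc2]; ring
    calc ‖∑ ℓ : Fin n, (c * Real.sin (a ℓ * t)) • b ℓ‖
        = Real.sqrt (‖∑ ℓ : Fin n, (c * Real.sin (a ℓ * t)) • b ℓ‖ ^ 2) :=
          (Real.sqrt_sq (norm_nonneg _)).symm
      _ ≤ Real.sqrt (2 * κ * n / T) := Real.sqrt_le_sqrt hle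
      _ ≤ M := hMbig
  · intro x t _
    have hinner : ∀ τ : ℝ, (inner ℝ (∑ ℓ : Fin n, (c * Real.sin (a ℓ * τ)) • b ℓ) x : ℝ)
        = ∑ ℓ : Fin n, (c * Real.sin (a ℓ * τ)) * (inner ℝ (b ℓ) x : ℝ) := by
      intro τ
      rw [sum_inner]
      exact Finset.sum_congr rfl fun ℓ _ => real_inner_smul_left _ _ _
    have hsq : ∀ τ : ℝ, (inner ℝ (∑ ℓ : Fin n, (c * Real.sin (a ℓ * τ)) • b ℓ) x : ℝ) ^ 2
        = ∑ ℓ : Fin n, ∑ m : Fin n,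
            (c ^ 2 * ((inner ℝ (b ℓ) x : ℝ) * (inner ℝ (b m) x : ℝ)))
              * (Real.sin (a ℓ * τ) * Real.sin (a m * τ)) := by
      intro τ
      rw [hinner τ, sq, Finset.sum_mul_sum]
      exact Finset.sum_congr rfl fun ℓ _ => Finset.sum_congr rfl fun m _ => by ring
    rw [intervalIntegral.integral_congr (fun τ _ => hsq τ)]
    have hcont : ∀ (ℓ m : Fin n), Continuous
        (fun τ => (c ^ 2 * ((inner ℝ (b ℓ) x : ℝ) * (inner ℝ (b m) x : ℝ)))
          * (Real.sin (a ℓ * τ) * Real.sin (a m * τ))) := by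
      intro ℓ m
      exact continuous_const.mul
        ((Real.continuous_sin.comp (continuous_const.mul continuous_id)).mul
          (Real.continuous_sin.comp (continuous_const.mul continuous_id)))
    have hint : ∀ (ℓ m : Fin n), IntervalIntegrable
        (fun τ => (c ^ 2 * ((inner ℝ (b ℓ) x : ℝ) * (inner ℝ (b m) x : ℝ)))
          * (Real.sin (a ℓ * τ) * Real.sin (a m * τ))) MeasureTheory.volume t (t + T) :=
      fun ℓ m => (hcont ℓ m).intervalIntegrable _ _
    rw [intervalIntegral.integral_finset_sum (fun ℓ _ =>
      (continuous_finset_sum _ (fun m _ => hcont ℓ m)).intervalIntegrable _ _)]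
    have : ∀ ℓ : Fin n, (∫ τ in t..t + T, ∑ m : Fin n,
        (c ^ 2 * ((inner ℝ (b ℓ) x : ℝ) * (inner ℝ (b m) x : ℝ)))
          * (Real.sin (a ℓ * τ) * Real.sin (a m * τ)))
        = c ^ 2 * (inner ℝ (b ℓ) x : ℝ) ^ 2 * (T / 2) := by
      intro ℓ
      rw [intervalIntegral.integral_finset_sum (fun m _ => hint ℓ m)]
      have hterm : ∀ m : Fin n, (∫ τ in t..t + T,
          (c ^ 2 * ((inner ℝ (b ℓ) x : ℝ) * (inner ℝ (b m) x : ℝ)))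
            * (Real.sin (a ℓ * τ) * Real.sin (a m * τ)))
          = if ℓ = m then
              c ^ 2 * ((inner ℝ (b ℓ) x : ℝ) * (inner ℝ (b m) x : ℝ)) * (T / 2) else 0 := by
        intro m
        rw [intervalIntegral.integral_const_mul, sin_sin_integral T hT (ℓ : ℕ) (m : ℕ) t]
        by_cases h : ℓ = m
        · subst h; simp
        · rw [if_neg (fun hv => h (Fin.val_injective hv)), if_neg h, mul_zero]
      rw [Finset.sum_congr rfl (fun m _ => hterm m), Finset.sum_ite_eq]
      simp [sq]
    rw [Finset.sum_congr rfl (fun ℓ _ => this ℓ)]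
    have hsum : ∑ ℓ : Fin n, c ^ 2 * (inner ℝ (b ℓ) x : ℝ) ^ 2 * (T / 2)
        = c ^ 2 * (T / 2) * ∑ ℓ : Fin n, (inner ℝ (b ℓ) x : ℝ) ^ 2 := by
      rw [Finset.mul_sum]
      exact Finset.sum_congr rfl fun ℓ _ => by ring
    have hx : ∑ ℓ : Fin n, (inner ℝ (b ℓ) x : ℝ) ^ 2 = ‖x‖ ^ 2 := by
      have := b.sum_inner_mul_inner x x
      rw [← real_inner_self_eq_norm_sq]
      rw [← this]
      exact Finset.sum_congr rfl fun ℓ _ => by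
        rw [sq, real_inner_comm]
    rw [hsum, hx, hc2]
    apply le_of_eq
    field_simp
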